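/- Let p ≥ 4 be an even integer and q an odd integer with 0 < q < p and gcd(p, q) = 1 (so that sin((p−q)σπ/p) ≠ 0 for every σ ∈ {1, …, p−1}). For an integer r with 1 ≤ r ≤ p − 1, define C(r) := (2/p) · ∑_{σ=1}^{p−1} sin(σπ/2)^2 · sin(rσπ/p) / sin((p−q)σπ/p). Then: (i) if r is even, C(r) = 0; (ii) if r is odd, letting a be the unique integer with 1 ≤ a ≤ p − 1 and a(p−q) ≡ r (mod p), and setting b := (a(p−q) − r)/p, one has C(r) = (−1)^b. -/

import Mathlib

open Finset
open Real

private lemma cosNatPi (n : ℕ) : Real.cos ((n:ℝ) * π) = (-1)^n := by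
  simpa using Real.cos_nat_mul_pi_sub 0 n

private lemma sinSubNatPi (x : ℝ) (n : ℕ) : Real.sin (x - (n:ℝ) * π) = (-1)^n * Real.sin x := by
  have h1 := Real.sin_nat_mul_pi_sub x n
  have h : Real.sin (x - (n:ℝ)*π) = - Real.sin ((n:ℝ)*π - x) := by
    rw [← Real.sin_neg]; ring_nf
  rw [h, h1]; ring

private lemma tele1 (a : ℕ) (θ : ℝ) :
    ∑ j ∈ range a, 2 * Real.sin θ * Real.cos (((a:ℝ) - 1 - 2*j) * θ)
      = 2 * Real.sin ((a:ℝ) * θ) := by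
  have h : ∀ j ∈ range a, 2 * Real.sin θ * Real.cos (((a:ℝ) - 1 - 2*j) * θ)
      = (fun j : ℕ => Real.sin (((a:ℝ) - 2*j) * θ)) j
        - (fun j : ℕ => Real.sin (((a:ℝ) - 2*j) * θ)) (j+1) := by
    intro j _
    simp only
    rw [Real.sin_sub_sin]
    push_cast
    have e1 : (((a:ℝ) - 2*j) * θ - ((a:ℝ) - 2*((j:ℝ)+1)) * θ) / 2 = θ := by ring
    have e2 : (((a:ℝ) - 2*j) * θ + ((a:ℝ) - 2*((j:ℝ)+1)) * θ) / 2 = ((a:ℝ) - 1 - 2*j) * θ := by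
      ring
    rw [e1, e2]
  rw [Finset.sum_congr rfl h, Finset.sum_range_sub' (fun j : ℕ => Real.sin (((a:ℝ) - 2*j) * θ))]
  push_cast
  rw [show ((a:ℝ) - 2*0) * θ = (a:ℝ) * θ by ring,
      show ((a:ℝ) - 2*(a:ℝ)) * θ = -((a:ℝ) * θ) by ring, Real.sin_neg]
  ring

private lemma tele2 (n : ℕ) (α : ℝ) :
    ∑ k ∈ range n, 2 * Real.sin α * Real.cos ((2*(k:ℝ)+1) * α)
      = Real.sin (2*(n:ℝ)*α) := by
  have h : ∀ k ∈ range n, 2 * Real.sin α * Real.cos ((2*(k:ℝ)+1) * α)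
      = (fun k : ℕ => Real.sin (2*(k:ℝ)*α)) (k+1) - (fun k : ℕ => Real.sin (2*(k:ℝ)*α)) k := by
    intro k _
    simp only
    rw [Real.sin_sub_sin]
    have e1 : (2*((k:ℝ)+1)*α - 2*(k:ℝ)*α) / 2 = α := by ring
    have e2 : (2*((k:ℝ)+1)*α + 2*(k:ℝ)*α) / 2 = (2*(k:ℝ)+1) * α := by ring
    push_cast
    rw [e1, e2]
  rw [Finset.sum_congr rfl h, Finset.sum_range_sub (fun k : ℕ => Real.sin (2*(k:ℝ)*α))]
  norm_num

private lemma innerSumZero (p : ℕ) (hp0 : 0 < p) (hpe : Even p) (t : ℤ) (ht : ¬ (p:ℤ) ∣ t) :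
    ∑ k ∈ range (p/2), Real.cos ((2*(k:ℝ)+1) * ((t:ℝ) * π / p)) = 0 := by
  set α : ℝ := (t:ℝ) * π / p with hα
  have hpR : (p:ℝ) ≠ 0 := by positivity
  have hsa : Real.sin α ≠ 0 := by
    intro h
    rw [Real.sin_eq_zero_iff] at h
    obtain ⟨n, hn⟩ := h
    apply ht
    rw [hα] at hn
    have hπ : (π:ℝ) ≠ 0 := Real.pi_ne_zero
    have h1 : ((n * p : ℤ) : ℝ) = (t : ℝ) := by
      field_simp at hn
      push_cast
      have h2 : ((n:ℝ) * (p:ℝ)) * π = (t:ℝ) * π := by rw [hn]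
      have := mul_right_cancel₀ hπ h2
      linarith
    have h2 : n * (p:ℤ) = t := by exact_mod_cast h1
    exact ⟨n, by rw [← h2]; ring⟩
  have h2 := tele2 (p/2) α
  have hps : 2 * ((p/2 : ℕ):ℝ) = (p:ℝ) := by
    rw_mod_cast [Nat.two_mul_div_two_of_even hpe]
  rw [hps] at h2
  have : Real.sin ((p:ℝ) * α) = 0 := by
    have : (p:ℝ) * α = (t:ℝ) * π := by rw [hα]; field_simp
    rw [this]; exact Real.sin_int_mul_pi t
  rw [this, ← Finset.mul_sum] at h2
  have h2s : (2 * Real.sin α) ≠ 0 := by positivity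
  rcases mul_eq_zero.mp h2 with h | h
  · exact absurd h h2s
  · exact h

private lemma splitEvenOdd (g : ℕ → ℝ) (n : ℕ) :
    ∑ σ ∈ range (2*n), g σ = ∑ k ∈ range n, (g (2*k) + g (2*k+1)) := by
  induction n with
  | zero => simp
  | succ n ih =>
    have h2 : 2 * (n+1) = (2*n + 1) + 1 := by ring
    rw [h2, Finset.sum_range_succ, Finset.sum_range_succ, ih, Finset.sum_range_succ]
    ring

private lemma main_sum (p q a b r : ℕ) (hp4 : 4 ≤ p) (hpe : Even p)
    (hgcd : Nat.Coprime p (p - q)) (hq0 : 0 < q) (hqp : q < p)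
    (ha1 : 1 ≤ a) (hap : a ≤ p - 1) (hab : a * (p - q) = r + b * p) :
    (2 / (p : ℝ)) * ∑ σ ∈ Finset.Icc 1 (p - 1),
        (Real.sin (σ * Real.pi / 2)) ^ 2 * Real.sin (r * σ * Real.pi / p) /
          Real.sin ((p - q : ℕ) * σ * Real.pi / p)
      = (-1 : ℝ) ^ b * (if Odd a then 1 else 0) := by
  set D := p - q with hDdef
  have hD1 : 1 ≤ D := by omega
  have hp0 : 0 < p := by omega
  have hpR : (p:ℝ) ≠ 0 := by positivity
  set f : ℕ → ℝ := fun σ =>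
    (Real.sin ((σ:ℝ) * π / 2)) ^ 2 * Real.sin ((r:ℝ) * σ * π / p) /
      Real.sin ((D:ℝ) * σ * π / p) with hf
  have key : ∑ σ ∈ Finset.Icc 1 (p - 1), f σ
      = (-1:ℝ)^b * (if Odd a then (p:ℝ)/2 else 0) := by
    have hins : Finset.range p = insert 0 (Finset.Icc 1 (p-1)) := by
      ext x; simp only [Finset.mem_range, Finset.mem_insert, Finset.mem_Icc]; omega
    have h0 : f 0 = 0 := by simp [hf]
    have hIcc : ∑ σ ∈ Finset.Icc 1 (p-1), f σ = ∑ σ ∈ Finset.range p, f σ := by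
      rw [hins, Finset.sum_insert (by simp), h0, zero_add]
    have hsplit : ∑ σ ∈ Finset.range p, f σ
        = ∑ k ∈ Finset.range (p/2), (f (2*k) + f (2*k+1)) := by
      rw [← splitEvenOdd f (p/2), Nat.two_mul_div_two_of_even hpe]
    have hek : ∀ k : ℕ, f (2*k) = 0 := by
      intro k
      simp only [hf]
      rw [show ((2*k:ℕ):ℝ) * π / 2 = (k:ℝ) * π by push_cast; ring, Real.sin_nat_mul_pi]
      norm_num
    have hok : ∀ k ∈ Finset.range (p/2), f (2*k+1)
        = (-1:ℝ)^b * ∑ j ∈ Finset.range a,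
            Real.cos ((2*(k:ℝ)+1) * (((((a:ℤ) - 1 - 2*(j:ℤ)) * (D:ℤ) : ℤ) : ℝ) * π / p)) := by
      intro k hk
      have hkp : k < p/2 := Finset.mem_range.mp hk
      have hk2 : 2*k+1 ≤ p - 1 := by omega
      set θ : ℝ := (D:ℝ) * ((2*k+1:ℕ):ℝ) * π / p with hθ
      have hsq : (Real.sin (((2*k+1:ℕ):ℝ) * π / 2))^2 = 1 := by
        have hc : Real.cos (((2*k+1:ℕ):ℝ) * π / 2) = 0 := by
          have e : ((2*k+1:ℕ):ℝ) * π / 2 = (k:ℝ)*π + π/2 := by push_cast; ring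
          rw [e, Real.cos_add, Real.cos_pi_div_two, Real.sin_pi_div_two,
            Real.sin_nat_mul_pi]
          ring
        have hpc := Real.sin_sq_add_cos_sq (((2*k+1:ℕ):ℝ) * π / 2)
        rw [hc] at hpc
        nlinarith [hpc]
      have hθne : Real.sin θ ≠ 0 := by
        intro h
        rw [Real.sin_eq_zero_iff] at h
        obtain ⟨n, hn⟩ := h
        rw [hθ] at hn
        have hπ : (π:ℝ) ≠ 0 := Real.pi_ne_zero
        have h1 : ((n * p : ℤ):ℝ) = ((D*(2*k+1) : ℕ):ℝ) := by
          field_simp at hn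
          push_cast at hn ⊢
          have h2 : ((n:ℝ)*(p:ℝ))*π = ((D:ℝ)*(2*(k:ℝ)+1))*π := by rw [hn]
          have := mul_right_cancel₀ hπ h2
          linarith
        have h2 : n * (p:ℤ) = ((D*(2*k+1) : ℕ):ℤ) := by exact_mod_cast h1
        have h3 : (p:ℤ) ∣ ((D*(2*k+1):ℕ):ℤ) := ⟨n, by rw [← h2]; ring⟩
        have h4 : p ∣ D*(2*k+1) := by exact_mod_cast h3
        have h5 : p ∣ 2*k+1 := hgcd.dvd_of_dvd_mul_left h4
        have h6 := Nat.le_of_dvd (by omega) h5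
        omega
      have hnum : Real.sin ((r:ℝ) * ((2*k+1:ℕ):ℝ) * π / p)
          = (-1:ℝ)^b * Real.sin ((a:ℝ) * θ) := by
        have hcast : (r:ℝ) = (a:ℝ)*(D:ℝ) - (b:ℝ)*(p:ℝ) := by
          have h1 : ((a*D:ℕ):ℝ) = ((r + b*p : ℕ):ℝ) := by exact_mod_cast congrArg Nat.cast hab
          push_cast at h1; linarith
        have harg : (r:ℝ) * ((2*k+1:ℕ):ℝ) * π / p
            = (a:ℝ)*θ - ((b*(2*k+1):ℕ):ℝ) * π := by
          rw [hθ, hcast]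
          push_cast
          field_simp
        rw [harg, sinSubNatPi]
        have hpow : ((-1:ℝ))^(b*(2*k+1)) = (-1:ℝ)^b := by
          rw [pow_mul]
          rcases Nat.even_or_odd b with hb | hb
          · rw [hb.neg_one_pow]; simp
          · rw [hb.neg_one_pow]
            exact Odd.neg_one_pow ⟨k, by ring⟩
        rw [hpow]
      have hcheb : Real.sin ((a:ℝ) * θ) / Real.sin θ
          = ∑ j ∈ Finset.range a, Real.cos (((a:ℝ) - 1 - 2*j) * θ) := by
        have h1 := tele1 a θ
        rw [← Finset.mul_sum] at h1
        rw [div_eq_iff hθne]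
        linear_combination -h1 / 2
      have hfval : f (2*k+1) = (-1:ℝ)^b * (Real.sin ((a:ℝ)*θ) / Real.sin θ) := by
        simp only [hf]
        rw [hsq, one_mul, ← hθ, hnum, mul_div_assoc]
      rw [hfval, hcheb]
      congr 1
      apply Finset.sum_congr rfl
      intro j _
      congr 1
      rw [hθ]
      push_cast
      ring
    rw [hIcc, hsplit, Finset.sum_congr rfl (fun k hk => by rw [hek k, hok k hk, zero_add]),
      ← Finset.mul_sum, Finset.sum_comm]
    congr 1
    have hinner : ∀ j ∈ Finset.range a,
        (∑ k ∈ Finset.range (p/2),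
          Real.cos ((2*(k:ℝ)+1) * (((((a:ℤ) - 1 - 2*(j:ℤ)) * (D:ℤ) : ℤ) : ℝ) * π / p)))
        = (if 2*j+1 = a then (p:ℝ)/2 else 0) := by
      intro j hj
      have hja : j < a := Finset.mem_range.mp hj
      by_cases hj2 : 2*j+1 = a
      · rw [if_pos hj2]
        have ht0 : ((a:ℤ) - 1 - 2*(j:ℤ)) * (D:ℤ) = 0 := by
          have : (a:ℤ) = 2*(j:ℤ)+1 := by exact_mod_cast hj2.symm
          rw [this]; ring
        rw [ht0]
        simp only [Int.cast_zero, zero_mul, zero_div, mul_zero, Real.cos_zero]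
        rw [Finset.sum_const, Finset.card_range, nsmul_eq_mul]
        have : ((p/2:ℕ):ℝ) = (p:ℝ)/2 := by
          have h2 : 2 * (p/2) = p := Nat.two_mul_div_two_of_even hpe
          have h3 : ((2*(p/2):ℕ):ℝ) = (p:ℝ) := by exact_mod_cast congrArg Nat.cast h2
          push_cast at h3
          linarith
        rw [this]; ring
      · rw [if_neg hj2]
        apply innerSumZero p hp0 hpe
        intro hdvd
        set c : ℤ := (a:ℤ) - 1 - 2*(j:ℤ) with hc
        have hc0 : c ≠ 0 := by
          intro h
          apply hj2
          have : (a:ℤ) = 2*(j:ℤ)+1 := by omega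
          exact_mod_cast this.symm
        have hcabs : c.natAbs < p := by
          have hja' : (j:ℤ) < (a:ℤ) := by exact_mod_cast hja
          have hap' : (a:ℤ) < (p:ℤ) := by exact_mod_cast (show a < p by omega)
          omega
        have h4 : p ∣ (c * (D:ℤ)).natAbs := by
          rw [← Int.natAbs_natCast p]
          exact Int.natAbs_dvd_natAbs.mpr hdvd
        rw [Int.natAbs_mul, Int.natAbs_natCast] at h4
        have h5 : p ∣ c.natAbs := hgcd.dvd_of_dvd_mul_right h4
        have h6 : 0 < c.natAbs := Int.natAbs_pos.mpr hc0
        have h7 := Nat.le_of_dvd h6 h5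
        omega
    rw [Finset.sum_congr rfl hinner]
    rcases Nat.even_or_odd a with ha | ha
    · rw [if_neg (Nat.not_odd_iff_even.mpr ha)]
      apply Finset.sum_eq_zero
      intro j hj
      rw [if_neg]
      intro h
      exact (Nat.not_odd_iff_even.mpr ha) ⟨j, by omega⟩
    · obtain ⟨m, hm⟩ := ha
      rw [if_pos ⟨m, hm⟩]
      have hco : ∀ j ∈ Finset.range a,
          (if 2*j+1 = a then (p:ℝ)/2 else 0) = (if j = m then (p:ℝ)/2 else 0) := by
        intro j _
        exact if_congr (by constructor <;> omega) rfl rfl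
      rw [Finset.sum_congr rfl hco,
        Finset.sum_ite_eq' (Finset.range a) m (fun _ => (p:ℝ)/2)]
      rw [if_pos (Finset.mem_range.mpr (by omega))]
  rw [key]
  by_cases ha : Odd a
  · rw [if_pos ha, if_pos ha]
    field_simp
  · rw [if_neg ha, if_neg ha]
    ring

private lemma extract_b (p D r a : ℕ) (hp0 : 0 < p) (hD1 : 1 ≤ D) (hr1 : 1 ≤ r) (hrp : r < p)
    (ha1 : 1 ≤ a) (hmod : a * D ≡ r [MOD p]) : ∃ b, a * D = r + b * p := by
  have hd := (Nat.modEq_iff_dvd).mp hmod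
  obtain ⟨k, hk⟩ := hd
  have hAD : (1:ℤ) ≤ (a:ℤ) * D := by
    have h1 : (1:ℕ) ≤ a * D := Nat.one_le_iff_ne_zero.mpr (by positivity)
    exact_mod_cast h1
  push_cast at hk
  have hk0 : k ≤ 0 := by
    by_contra hpos
    push_neg at hpos
    have h1 : (p:ℤ) ≤ p * k := le_mul_of_one_le_right (by positivity) (by omega)
    have h2 : (r:ℤ) < p := by exact_mod_cast hrp
    linarith
  refine ⟨(-k).toNat, ?_⟩
  have hbk : ((-k).toNat : ℤ) = -k := Int.toNat_of_nonneg (by omega)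
  have h3 : (a:ℤ) * D = r + ((-k).toNat : ℤ) * p := by rw [hbk]; linarith
  exact_mod_cast h3

private lemma parity_a (p D r a b : ℕ) (hp2 : p % 2 = 0) (hD2 : D % 2 = 1)
    (hb : a * D = r + b * p) : a % 2 = r % 2 := by
  have e1 : (a * D) % 2 = a % 2 := by
    rw [Nat.mul_mod, hD2, mul_one, Nat.mod_mod_of_dvd _ dvd_rfl]
  have e2 : (r + b * p) % 2 = r % 2 := by
    rw [Nat.add_mod, Nat.mul_mod, hp2, mul_zero, Nat.zero_mod, add_zero,
      Nat.mod_mod_of_dvd _ dvd_rfl]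
  rw [hb] at e1
  rw [e2] at e1
  exact e1.symm


/-- eq. (4.2)/(C.2) of the paper. Let `p ≥ 4` be an even integer and
`q` an odd integer with `0 < q < p` and `gcd(p, q) = 1`. For `1 ≤ r ≤ p - 1` set
`C(r) := (2/p) ∑_{σ=1}^{p-1} sin(σπ/2)^2 · sin(rσπ/p) / sin((p-q)σπ/p)`
(the `A_{p-1}` RSOS three-point coupling `C_{p/2, p/2, r}`). Then:
(i) if `r` is even, `C(r) = 0`;
(ii) if `r` is odd and `a` satisfies `1 ≤ a ≤ p - 1` and `a(p-q) ≡ r (mod p)`,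
then with `b := (a(p-q) - r)/p` one has `C(r) = (-1)^b`. -/
theorem typeA_three_point_coupling_formula
    (p q : ℕ) (hp4 : 4 ≤ p) (hpe : Even p) (hqo : Odd q)
    (hq0 : 0 < q) (hqp : q < p) (hgcd : Nat.gcd p q = 1) :
    ∀ r : ℕ, 1 ≤ r → r ≤ p - 1 →
      ((Even r →
        (2 / (p : ℝ)) * ∑ σ ∈ Finset.Icc 1 (p - 1),
          (Real.sin (σ * Real.pi / 2)) ^ 2 * Real.sin (r * σ * Real.pi / p) /
            Real.sin ((p - q : ℕ) * σ * Real.pi / p) = 0)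
      ∧ (Odd r → ∀ a : ℕ, 1 ≤ a → a ≤ p - 1 → a * (p - q) ≡ r [MOD p] →
        (2 / (p : ℝ)) * ∑ σ ∈ Finset.Icc 1 (p - 1),
          (Real.sin (σ * Real.pi / 2)) ^ 2 * Real.sin (r * σ * Real.pi / p) /
            Real.sin ((p - q : ℕ) * σ * Real.pi / p)
          = (-1 : ℝ) ^ ((a * (p - q) - r) / p))) := by
  intro r hr1 hrp
  have hp0 : 0 < p := by omega
  have hgcdD : Nat.Coprime p (p - q) :=
    (Nat.coprime_self_sub_right (le_of_lt hqp)).mpr hgcd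
  obtain ⟨t, hteq⟩ := hpe
  obtain ⟨d, hdq⟩ := hqo
  have hp2 : p % 2 = 0 := by omega
  have hD2 : (p - q) % 2 = 1 := by omega
  have hrp' : r < p := by omega
  constructor
  · -- even case
    intro hre
    haveI : NeZero p := ⟨by omega⟩
    have hunit : IsUnit (((p - q : ℕ)) : ZMod p) :=
      (ZMod.isUnit_iff_coprime (p - q) p).mpr hgcdD.symm
    set u : ZMod p := (r : ZMod p) * (((p - q : ℕ)) : ZMod p)⁻¹ with hu
    set a := u.val with hav
    have hmod : a * (p - q) ≡ r [MOD p] := by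
      have h1 : ((a * (p - q) : ℕ) : ZMod p) = (r : ZMod p) := by
        push_cast
        rw [hav, ZMod.natCast_val, ZMod.cast_id, hu, mul_assoc,
          ZMod.inv_mul_of_unit _ hunit, mul_one]
      exact (ZMod.natCast_eq_natCast_iff _ _ _).mp h1
    have ha0 : a ≠ 0 := by
      intro h
      have h1 : 0 % p = r % p := by simpa [h, Nat.ModEq] using hmod
      rw [Nat.zero_mod, Nat.mod_eq_of_lt hrp'] at h1
      omega
    have hap : a ≤ p - 1 := by
      have := ZMod.val_lt u
      omega
    obtain ⟨b, hb⟩ := extract_b p (p - q) r a hp0 (by omega) hr1 hrp' (by omega) hmod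
    have haeven : ¬ Odd a := by
      rw [Nat.not_odd_iff_even, Nat.even_iff]
      have := parity_a p (p - q) r a b hp2 hD2 hb
      rw [this, ← Nat.even_iff]
      exact hre
    rw [main_sum p q a b r hp4 ⟨t, hteq⟩ hgcdD hq0 hqp (by omega) hap hb,
      if_neg haeven, mul_zero]
  · -- odd case
    intro hro a ha1 hap hmod
    obtain ⟨b, hb⟩ := extract_b p (p - q) r a hp0 (by omega) hr1 hrp' ha1 hmod
    have haodd : Odd a := by
      rw [Nat.odd_iff]
      have := parity_a p (p - q) r a b hp2 hD2 hb
      rw [this, ← Nat.odd_iff]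
      exact hro
    have hbeq : (a * (p - q) - r) / p = b := by
      rw [show a * (p - q) - r = b * p by omega]
      exact Nat.mul_div_cancel b hp0
    rw [hbeq, main_sum p q a b r hp4 ⟨t, hteq⟩ hgcdD hq0 hqp ha1 hap hb,
      if_pos haodd, mul_one]
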